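/- Let h(t) be a real polynomial of degree s ≤ d with h(0) > 0, let r be an integer with 1 ≤ r ≤ d - s, and let (p̃, q̃) be the symmetric decomposition of U_r^{d+1}h(t) with respect to d. Then the coefficient of t^{d-1} in q̃ equals -h(0) < 0; in particular, q̃ has a negative coefficient. -/

import Mathlib

open Polynomial

/-- The geometric polynomial `1 + t + ⋯ + t^{r-1}`. -/
noncomputable def geomPoly (r : ℕ) : ℝ[X] := ∑ j ∈ Finset.range r, X ^ j

/-- `sect r i f` is the polynomial `f^{⟨r,i⟩}` whose `n`-th coefficient is the `(r*n+i)`-th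
coefficient of `f` (valid definition for `r ≥ 1`). -/
noncomputable def sect (r i : ℕ) (f : ℝ[X]) : ℝ[X] :=
  ∑ n ∈ Finset.range (f.natDegree + 1), C (f.coeff (r * n + i)) * X ^ n

/-- The operator `U_r^D h = (h·(1+t+⋯+t^{r-1})^D)^{⟨r,0⟩}`. -/
noncomputable def Uop (r D : ℕ) (h : ℝ[X]) : ℝ[X] := sect r 0 (h * geomPoly r ^ D)

/-- `(p, q)` is the symmetric decomposition of `h` with respect to `d`. -/
def IsSymmDecomp (d : ℕ) (h p q : ℝ[X]) : Prop :=
  h = p + X * q ∧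
  p.natDegree ≤ d ∧ (∀ i ≤ d, p.coeff i = p.coeff (d - i)) ∧
  q.natDegree ≤ d - 1 ∧ (∀ i ≤ d - 1, q.coeff i = q.coeff (d - 1 - i))

/-- A real polynomial is real-rooted if it is zero or all of its complex roots are real. -/
def RealRooted (f : ℝ[X]) : Prop :=
  f = 0 ∨ ∀ z : ℂ, aeval z f = 0 → z.im = 0

/-- The real roots of `f`, with multiplicity, in weakly decreasing order. -/
noncomputable def descRoots (f : ℝ[X]) : List ℝ := (f.roots.sort (· ≤ ·)).reverse

/-- `Interlaces f g` means `f ⪯ g`: both are real-rooted and, unless one of them is zero,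
the decreasingly ordered root lists `s` of `f` and `t` of `g` satisfy
`⋯ ≤ s_2 ≤ t_2 ≤ s_1 ≤ t_1` (with `deg g = deg f` or `deg f + 1`). -/
def Interlaces (f g : ℝ[X]) : Prop :=
  RealRooted f ∧ RealRooted g ∧
  (f = 0 ∨ g = 0 ∨
    (((descRoots g).length = (descRoots f).length ∨
      (descRoots g).length = (descRoots f).length + 1) ∧
     (∀ i, (hf : i < (descRoots f).length) → (hg : i < (descRoots g).length) →
        (descRoots f).get ⟨i, hf⟩ ≤ (descRoots g).get ⟨i, hg⟩) ∧
     (∀ i, (hg : i + 1 < (descRoots g).length) → (hf : i < (descRoots f).length) →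
        (descRoots g).get ⟨i + 1, hg⟩ ≤ (descRoots f).get ⟨i, hf⟩)))

/-- The coefficient of `h` at an integer index, zero for negative indices. -/
noncomputable def coeffZ (h : ℝ[X]) (j : ℤ) : ℝ := if 0 ≤ j then h.coeff j.toNat else 0

/-- Property (H): `h_0 + ⋯ + h_i ≥ h_d + h_{d-1} + ⋯ + h_{d-i+1}` for all `i`. -/
def PropH (d : ℕ) (h : ℝ[X]) : Prop :=
  ∀ i : ℕ, ∑ j ∈ Finset.range i, coeffZ h ((d : ℤ) - j) ≤ ∑ j ∈ Finset.range (i + 1), h.coeff j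

/-- Property (S): `h_0 + ⋯ + h_i ≤ h_s + h_{s-1} + ⋯ + h_{s-i}` for all `i`. -/
def PropS (s : ℕ) (h : ℝ[X]) : Prop :=
  ∀ i : ℕ, ∑ j ∈ Finset.range (i + 1), h.coeff j ≤ ∑ j ∈ Finset.range (i + 1), coeffZ h ((s : ℤ) - j)

lemma sect_coeff (r : ℕ) (hr : 1 ≤ r) (f : ℝ[X]) (k : ℕ) :
    (sect r 0 f).coeff k = f.coeff (r * k) := by
  unfold sect
  rw [finset_sum_coeff]
  simp only [coeff_C_mul, coeff_X_pow, mul_ite, mul_one, mul_zero]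
  rw [Finset.sum_ite_eq (Finset.range (f.natDegree + 1)) k (fun n => f.coeff (r * n + 0))]
  by_cases hk : k ∈ Finset.range (f.natDegree + 1)
  · simp [hk]
  · simp only [hk, if_false]
    rw [Finset.mem_range, not_lt] at hk
    rw [coeff_eq_zero_of_natDegree_lt]
    calc f.natDegree < k := hk
    _ ≤ r * k := Nat.le_mul_of_pos_left k hr

lemma geom_eval0 (r : ℕ) (hr : 1 ≤ r) : (geomPoly r).coeff 0 = 1 := by
  unfold geomPoly
  rw [finset_sum_coeff]
  rw [Finset.sum_eq_single 0]
  · simp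
  · intro j _ hj; simp [coeff_X_pow, hj.symm]
  · intro hc; exfalso; exact hc (Finset.mem_range.mpr hr)

lemma geom_natDegree_le (r : ℕ) (hr : 1 ≤ r) : (geomPoly r).natDegree ≤ r - 1 := by
  unfold geomPoly
  apply Polynomial.natDegree_sum_le_of_forall_le
  intro j hj
  rw [natDegree_X_pow]
  exact Nat.le_sub_one_of_lt (Finset.mem_range.mp hj)

/-- (Optimality of the bound in Corollary `nonnegativity`(ii).) If `h` has
degree `s ≤ d` with `h(0) > 0` and `1 ≤ r ≤ d - s`, then in the symmetric decomposition
`(p̃, q̃)` of `U_r^{d+1} h` the coefficient of `t^{d-1}` in `q̃` equals `-h(0) < 0`; in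
particular `q̃` has a negative coefficient. -/
theorem statement14 (d s : ℕ) (h : ℝ[X]) (hdeg : h.natDegree = s) (hsd : s ≤ d)
    (h0 : 0 < h.coeff 0) (r : ℕ) (hr1 : 1 ≤ r) (hr2 : r ≤ d - s)
    (pt qt : ℝ[X]) (hpq : IsSymmDecomp d (Uop r (d + 1) h) pt qt) :
    qt.coeff (d - 1) = -h.coeff 0 ∧ ∃ i, qt.coeff i < 0 := by
  obtain ⟨heq, _, hpsym, _, _⟩ := hpq
  have hrs : r + s ≤ d := by omega
  set f : ℝ[X] := h * geomPoly r ^ (d + 1) with hf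
  -- coefficient 0
  have c0 : (Uop r (d+1) h).coeff 0 = h.coeff 0 := by
    show (sect r 0 f).coeff 0 = h.coeff 0
    rw [sect_coeff r hr1, Nat.mul_zero]
    have hg1 : (geomPoly r ^ (d+1)).coeff 0 = 1 := by
      rw [coeff_zero_eq_eval_zero, eval_pow, ← coeff_zero_eq_eval_zero, geom_eval0 r hr1, one_pow]
    rw [hf, mul_coeff_zero, hg1, mul_one]
  -- degree bound
  have hdegf : f.natDegree ≤ s + (d + 1) * (r - 1) := by
    calc f.natDegree ≤ h.natDegree + (geomPoly r ^ (d+1)).natDegree := natDegree_mul_le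
      _ ≤ s + (d + 1) * (r - 1) := by
          rw [hdeg]
          gcongr  -- reduce to pow bound?
          calc (geomPoly r ^ (d+1)).natDegree ≤ (d+1) * (geomPoly r).natDegree :=
                natDegree_pow_le
            _ ≤ (d+1) * (r-1) := Nat.mul_le_mul_left _ (geom_natDegree_le r hr1)
  have hlt : f.natDegree < r * d := by
    apply lt_of_le_of_lt hdegf
    obtain ⟨r', rfl⟩ : ∃ r', r = r' + 1 := ⟨r - 1, by omega⟩
    have : s + r' < d := by omega
    simp only [Nat.add_sub_cancel]
    nlinarith
  have cd : (Uop r (d+1) h).coeff d = 0 := by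
    show (sect r 0 f).coeff d = 0
    rw [sect_coeff r hr1]
    exact coeff_eq_zero_of_natDegree_lt hlt
  have hd1 : 1 ≤ d := by omega
  -- coefficient equations
  have e0 : (Uop r (d+1) h).coeff 0 = pt.coeff 0 := by
    rw [heq]; simp [mul_coeff_zero]
  have ed : (Uop r (d+1) h).coeff d = pt.coeff d + qt.coeff (d - 1) := by
    rw [heq, coeff_add]
    congr 1
    obtain ⟨d', rfl⟩ : ∃ d', d = d' + 1 := ⟨d - 1, by omega⟩
    rw [coeff_X_mul]
    simp
  have hpd : pt.coeff d = pt.coeff 0 := by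
    have := hpsym 0 (Nat.zero_le d)
    simpa using this.symm
  have key : qt.coeff (d - 1) = -h.coeff 0 := by
    have : (0:ℝ) = h.coeff 0 + qt.coeff (d-1) := by
      rw [← cd, ed, hpd, ← e0, c0]
    linarith
  exact ⟨key, ⟨d - 1, by rw [key]; linarith⟩⟩
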